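/- Greedy characterizes optimality for linear weights on matroids: a base x of a matroid M minimizes a weight function w over all bases if and only if x is the output of the greedy algorithm on some permutation of E that sorts w in non-decreasing order. -/

import Mathlib

open Classical in
/-- The greedy algorithm on a matroid: process elements in the order of the list, adding
each element whenever independence is preserved. -/
noncomputable def matroidGreedy {α : Type*} (M : Matroid α) (l : List α) : Set α :=
  l.foldl (fun s e => if M.Indep (insert e s) then insert e s else s) ∅

namespace GreedyAux

open Classical Set

variable {α : Type*} (M : Matroid α)

/-- One step of the greedy algorithm. -/
noncomputable def step (s : Set α) (e : α) : Set α :=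
  if M.Indep (insert e s) then insert e s else s

lemma greedy_eq (l : List α) : matroidGreedy M l = l.foldl (step M) ∅ := rfl

lemma subset_step (s : Set α) (e : α) : s ⊆ step M s e := by
  unfold step; split_ifs
  exacts [subset_insert _ _, subset_rfl]

lemma step_subset (s : Set α) (e : α) : step M s e ⊆ insert e s := by
  unfold step; split_ifs
  exacts [subset_rfl, subset_insert _ _]

lemma subset_foldl (s : Set α) (l : List α) : s ⊆ l.foldl (step M) s := by
  induction l generalizing s with
  | nil => exact subset_rfl
  | cons e l ih => exact (subset_step M s e).trans (ih _)

lemma foldl_subset (s : Set α) (l : List α) :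
    l.foldl (step M) s ⊆ s ∪ {a | a ∈ l} := by
  induction l generalizing s with
  | nil => simp
  | cons e l ih =>
    intro a ha
    rcases ih (step M s e) ha with h | h
    · rcases (step_subset M s e) h with h | h
      · right; simp [h]
      · left; exact h
    · right; simp only [List.mem_cons, mem_setOf_eq] at h ⊢; tauto

lemma mem_foldl_iff {e : α} {l : List α} (he : e ∉ l) (s : Set α) :
    e ∈ l.foldl (step M) s ↔ e ∈ s := by
  constructor
  · intro h
    rcases foldl_subset M s l h with h | h
    · exact h
    · exact absurd h he
  · intro h; exact subset_foldl M s l h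

lemma indep_foldl (s : Set α) (l : List α) (hs : M.Indep s) :
    M.Indep (l.foldl (step M) s) := by
  induction l generalizing s with
  | nil => exact hs
  | cons e l ih =>
    apply ih
    unfold step; split_ifs with h
    exacts [h, hs]

lemma state_eq {l1 l2 : List α} (hnd : (l1 ++ l2).Nodup) :
    l1.foldl (step M) ∅ = (l1 ++ l2).foldl (step M) ∅ ∩ {a | a ∈ l1} := by
  apply subset_antisymm
  · intro a ha
    refine ⟨?_, ?_⟩
    · rw [List.foldl_append]; exact subset_foldl M _ l2 ha
    · have := foldl_subset M ∅ l1 ha; simpa using this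
  · rintro a ⟨hG, hl1⟩
    have hdisj : l1.Disjoint l2 := (List.nodup_append'.mp hnd).2.2
    have ha2 : a ∉ l2 := fun h => hdisj hl1 h
    rw [List.foldl_append] at hG
    exact (mem_foldl_iff M ha2 _).mp hG

lemma mem_greedy_iff {l1 l2 : List α} {e : α} (hnd : (l1 ++ e :: l2).Nodup) :
    e ∈ matroidGreedy M (l1 ++ e :: l2) ↔
      M.Indep (insert e (matroidGreedy M (l1 ++ e :: l2) ∩ {a | a ∈ l1})) := by
  have hst : l1.foldl (step M) ∅
      = matroidGreedy M (l1 ++ e :: l2) ∩ {a | a ∈ l1} := by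
    rw [greedy_eq]; exact state_eq M hnd
  have hnd2 : (e :: l2).Nodup := (List.nodup_append'.mp hnd).2.1
  have he2 : e ∉ l2 := by simpa using (List.nodup_cons.mp hnd2).1
  have hes : e ∉ l1.foldl (step M) ∅ := by
    intro h
    have := foldl_subset M ∅ l1 h
    have hdisj : l1.Disjoint (e :: l2) := (List.nodup_append'.mp hnd).2.2
    simp only [union_empty, empty_union, mem_setOf_eq] at this
    exact hdisj this (List.mem_cons_self)
  set s := l1.foldl (step M) ∅ with hs
  have key : matroidGreedy M (l1 ++ e :: l2) = l2.foldl (step M) (step M s e) := by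
    rw [greedy_eq, List.foldl_append, List.foldl_cons]
  rw [← hst]
  by_cases h : M.Indep (insert e s)
  · have hstep : step M s e = insert e s := if_pos h
    refine ⟨fun _ => h, fun _ => ?_⟩
    rw [key, hstep]
    exact subset_foldl M _ l2 (mem_insert e s)
  · have hstep : step M s e = s := if_neg h
    have hne : e ∉ matroidGreedy M (l1 ++ e :: l2) := by
      rw [key, hstep]
      intro hc
      exact hes ((mem_foldl_iff M he2 s).mp hc)
    exact ⟨fun hc => absurd hc hne, fun hc => absurd hc h⟩

lemma greedy_base {l : List α} (hnd : l.Nodup) (hall : ∀ a, a ∈ l) :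
    M.IsBase (matroidGreedy M l) := by
  have hind : M.Indep (matroidGreedy M l) := indep_foldl M ∅ l M.empty_indep
  refine hind.isBase_of_forall_insert ?_
  rintro e ⟨heE, heG⟩ hins
  obtain ⟨l1, l2, rfl⟩ := List.append_of_mem (hall e)
  exact absurd (hins.subset (insert_subset_insert inter_subset_left))
    (fun h => heG ((mem_greedy_iff M hnd).mpr h))

lemma exchange [Fintype α] {y : Set α} (hy : M.IsBase y) {e : α} (he : e ∉ y) {s : Set α}
    (hs : s ⊆ y) (hins : M.Indep (insert e s)) :
    ∃ f, f ∈ y ∧ f ∉ s ∧ f ≠ e ∧ M.IsBase (insert e (y \ {f})) := by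
  obtain ⟨B, hB, hsubB, hBsub⟩ := hins.exists_isBase_subset_union_isBase hy
  have heB : e ∈ B := hsubB (mem_insert _ _)
  have hBy : B ⊆ insert e y := by
    intro a ha
    rcases hBsub ha with h | h
    · rcases h with rfl | h
      · exact mem_insert _ _
      · exact mem_insert_of_mem _ (hs h)
    · exact mem_insert_of_mem _ h
  have hyB : ¬ y ⊆ B := by
    intro h
    exact he ((hy.eq_of_subset_isBase hB h) ▸ heB)
  obtain ⟨f, hfy, hfB⟩ := not_subset.mp hyB
  have hfs : f ∉ s := fun h => hfB (hsubB (mem_insert_of_mem _ h))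
  have hfe : f ≠ e := fun h => he (h ▸ hfy)
  have hB1 : B ⊆ insert e (y \ {f}) := by
    intro a ha
    rcases hBy ha with rfl | h
    · exact mem_insert _ _
    · exact mem_insert_of_mem _ ⟨h, fun hc => hfB (hc ▸ ha)⟩
  have hcard : (insert e (y \ {f})).encard ≤ B.encard := by
    rw [encard_insert_of_notMem (fun hc => he hc.1),
      encard_diff_singleton_add_one hfy, hB.encard_eq_encard_of_isBase hy]
  have hBeq : B = insert e (y \ {f}) :=
    (Set.toFinite _).eq_of_subset_of_encard_le hB1 hcard
  exact ⟨f, hfy, hfs, hfe, hBeq ▸ hB⟩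

variable (w : α → ℝ)

lemma W_eq [Fintype α] (s : Set α) :
    ∑ᶠ a ∈ s, w a = ∑ a ∈ (Set.toFinite s).toFinset, w a :=
  finsum_mem_eq_finite_toFinset_sum _ _

lemma W_exchange [Fintype α] {y : Set α} {e f : α} (hfy : f ∈ y) (he : e ∉ y) :
    ∑ᶠ a ∈ insert e (y \ {f}), w a = (∑ᶠ a ∈ y, w a) - w f + w e := by
  rw [W_eq, W_eq]
  have hset : (Set.toFinite (insert e (y \ {f}))).toFinset
      = insert e ((Set.toFinite y).toFinset.erase f) := by
    ext a
    simp only [Set.Finite.mem_toFinset, Set.mem_insert_iff, Set.mem_diff,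
      Set.mem_singleton_iff, Finset.mem_insert, Finset.mem_erase]
    tauto
  rw [hset, Finset.sum_insert (by
      simp only [Finset.mem_erase, Set.Finite.mem_toFinset]
      exact fun h => he h.2),
    Finset.sum_erase_eq_sub ((Set.toFinite y).mem_toFinset.mpr hfy)]
  ring

/-- Exchange induction: the greedy output on a sorted list has minimal weight among bases. -/
lemma min_aux [Fintype α] {l : List α} (hnd : l.Nodup) (hall : ∀ a, a ∈ l)
    (hsort : l.Pairwise fun a b => w a ≤ w b) :
    ∀ n (l1 l2 : List α) (y : Set α), l = l1 ++ l2 → l2.length = n → M.IsBase y →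
      (∀ a ∈ l1, (a ∈ y ↔ a ∈ matroidGreedy M l)) →
      (∑ᶠ a ∈ matroidGreedy M l, w a) ≤ ∑ᶠ a ∈ y, w a := by
  intro n
  induction n with
  | zero =>
    intro l1 l2 y hl hlen hy hagree
    obtain rfl : l2 = [] := List.length_eq_zero_iff.mp hlen
    rw [List.append_nil] at hl
    have hyG : y = matroidGreedy M l :=
      Set.ext fun a => hagree a (hl ▸ hall a)
    rw [hyG]
  | succ n ih =>
    intro l1 l2 y hl hlen hy hagree
    cases l2 with
    | nil => simp at hlen
    | cons e l2' =>
      subst hl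
      have hlen' : l2'.length = n := by simpa using hlen
      have he1 : e ∉ l1 := fun h =>
        (List.nodup_append'.mp hnd).2.2 h (List.mem_cons_self)
      have hGl1 : matroidGreedy M (l1 ++ e :: l2') ∩ {a | a ∈ l1}
          = y ∩ {a | a ∈ l1} := by
        ext a
        simp only [mem_inter_iff, mem_setOf_eq]
        exact ⟨fun ⟨h1, h2⟩ => ⟨(hagree a h2).mpr h1, h2⟩,
          fun ⟨h1, h2⟩ => ⟨(hagree a h2).mp h1, h2⟩⟩
      by_cases hey : e ∈ y <;> by_cases heG : e ∈ matroidGreedy M (l1 ++ e :: l2')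
      · -- both contain e : recurse
        refine ih (l1 ++ [e]) l2' y (by simp) hlen' hy ?_
        intro a ha
        rcases List.mem_append.mp ha with h | h
        · exact hagree a h
        · obtain rfl : a = e := by simpa using h
          exact ⟨fun _ => heG, fun _ => hey⟩
      · -- e ∈ y, e ∉ G : contradiction, greedy would have taken e
        exfalso
        have hni : ¬ M.Indep (insert e (matroidGreedy M (l1 ++ e :: l2') ∩ {a | a ∈ l1})) :=
          fun h => heG ((mem_greedy_iff M hnd).mpr h)
        rw [hGl1] at hni
        exact hni (hy.indep.subset (insert_subset hey inter_subset_left))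
      · -- e ∈ G, e ∉ y : exchange
        have hind : M.Indep (insert e (matroidGreedy M (l1 ++ e :: l2') ∩ {a | a ∈ l1})) :=
          (mem_greedy_iff M hnd).mp heG
        rw [hGl1] at hind
        obtain ⟨f, hfy, hfs, hfe, hB'⟩ := exchange M hy hey inter_subset_left hind
        have hfl1 : f ∉ l1 := fun h => hfs ⟨hfy, h⟩
        have hfl2 : f ∈ l2' := by
          have := hall f
          rcases List.mem_append.mp this with h | h
          · exact absurd h hfl1
          · rcases List.mem_cons.mp h with h | h
            · exact absurd h hfe
            · exact h
        have hwef : w e ≤ w f := by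
          have hs2 : (e :: l2').Pairwise (fun a b => w a ≤ w b) :=
            hsort.sublist (List.sublist_append_right l1 _)
          exact List.rel_of_pairwise_cons hs2 hfl2
        have hWB' : ∑ᶠ a ∈ insert e (y \ {f}), w a = (∑ᶠ a ∈ y, w a) - w f + w e :=
          W_exchange w hfy hey
        have hle := ih (l1 ++ [e]) l2' (insert e (y \ {f})) (by simp) hlen' hB' ?_
        · linarith
        · intro a ha
          rcases List.mem_append.mp ha with h | h
          · have hae : a ≠ e := fun hc => he1 (hc ▸ h)
            have haf : a ≠ f := fun hc => hfl1 (hc ▸ h)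
            constructor
            · rintro (rfl | ⟨hay, _⟩)
              · exact absurd rfl hae
              · exact (hagree a h).mp hay
            · intro haG
              exact mem_insert_of_mem _ ⟨(hagree a h).mpr haG, haf⟩
          · obtain rfl : a = e := by simpa using h
            exact ⟨fun _ => heG, fun _ => mem_insert _ _⟩
      · -- e in neither : recurse
        refine ih (l1 ++ [e]) l2' y (by simp) hlen' hy ?_
        intro a ha
        rcases List.mem_append.mp ha with h | h
        · exact hagree a h
        · obtain rfl : a = e := by simpa using h
          exact ⟨fun h' => absurd h' hey, fun h' => absurd h' heG⟩

/-- Exchange induction for the tie-broken list: greedy output equals the minimal base `x`. -/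
lemma eq_aux [Fintype α] {x : Set α} (hx : M.IsBase x)
    (hmin : ∀ y : Set α, M.IsBase y → (∑ᶠ a ∈ x, w a) ≤ ∑ᶠ a ∈ y, w a)
    {l : List α} (hnd : l.Nodup) (hall : ∀ a, a ∈ l)
    (hsort : l.Pairwise fun a b => w a < w b ∨ (w a = w b ∧ (b ∈ x → a ∈ x))) :
    ∀ n (l1 l2 : List α), l = l1 ++ l2 → l2.length = n →
      (∀ a ∈ l1, (a ∈ x ↔ a ∈ matroidGreedy M l)) →
      matroidGreedy M l = x := by
  intro n
  induction n with
  | zero =>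
    intro l1 l2 hl hlen hagree
    obtain rfl : l2 = [] := List.length_eq_zero_iff.mp hlen
    rw [List.append_nil] at hl
    exact (Set.ext fun a => hagree a (hl ▸ hall a)).symm
  | succ n ih =>
    intro l1 l2 hl hlen hagree
    cases l2 with
    | nil => simp at hlen
    | cons e l2' =>
      subst hl
      have hlen' : l2'.length = n := by simpa using hlen
      have he1 : e ∉ l1 := fun h =>
        (List.nodup_append'.mp hnd).2.2 h (List.mem_cons_self)
      have hGl1 : matroidGreedy M (l1 ++ e :: l2') ∩ {a | a ∈ l1}
          = x ∩ {a | a ∈ l1} := by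
        ext a
        simp only [mem_inter_iff, mem_setOf_eq]
        exact ⟨fun ⟨h1, h2⟩ => ⟨(hagree a h2).mpr h1, h2⟩,
          fun ⟨h1, h2⟩ => ⟨(hagree a h2).mp h1, h2⟩⟩
      by_cases hex : e ∈ x <;> by_cases heG : e ∈ matroidGreedy M (l1 ++ e :: l2')
      · refine ih (l1 ++ [e]) l2' (by simp) hlen' ?_
        intro a ha
        rcases List.mem_append.mp ha with h | h
        · exact hagree a h
        · obtain rfl : a = e := by simpa using h
          exact ⟨fun _ => heG, fun _ => hex⟩
      · exfalso
        have hni : ¬ M.Indep (insert e (matroidGreedy M (l1 ++ e :: l2') ∩ {a | a ∈ l1})) :=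
          fun h => heG ((mem_greedy_iff M hnd).mpr h)
        rw [hGl1] at hni
        exact hni (hx.indep.subset (insert_subset hex inter_subset_left))
      · exfalso
        have hind : M.Indep (insert e (matroidGreedy M (l1 ++ e :: l2') ∩ {a | a ∈ l1})) :=
          (mem_greedy_iff M hnd).mp heG
        rw [hGl1] at hind
        obtain ⟨f, hfx, hfs, hfe, hB'⟩ := exchange M hx hex inter_subset_left hind
        have hfl1 : f ∉ l1 := fun h => hfs ⟨hfx, h⟩
        have hfl2 : f ∈ l2' := by
          have := hall f
          rcases List.mem_append.mp this with h | h
          · exact absurd h hfl1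
          · rcases List.mem_cons.mp h with h | h
            · exact absurd h hfe
            · exact h
        have hwef : w e < w f := by
          have hs2 : (e :: l2').Pairwise
              (fun a b => w a < w b ∨ (w a = w b ∧ (b ∈ x → a ∈ x))) :=
            hsort.sublist (List.sublist_append_right l1 _)
          rcases List.rel_of_pairwise_cons hs2 hfl2 with h | ⟨_, h⟩
          · exact h
          · exact absurd (h hfx) hex
        have hWB' : ∑ᶠ a ∈ insert e (x \ {f}), w a = (∑ᶠ a ∈ x, w a) - w f + w e :=
          W_exchange w hfx hex
        have := hmin _ hB'
        rw [hWB'] at this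
        linarith
      · refine ih (l1 ++ [e]) l2' (by simp) hlen' ?_
        intro a ha
        rcases List.mem_append.mp ha with h | h
        · exact hagree a h
        · obtain rfl : a = e := by simpa using h
          exact ⟨fun h' => absurd h' hex, fun h' => absurd h' heG⟩

end GreedyAux

/-- a base `x` of a matroid minimizes a weight function `w` over all bases
iff `x` is the output of the greedy algorithm on some permutation of the ground set
sorting `w` in non-decreasing order. -/
theorem greedy_characterizes_min_weight_base
    {α : Type*} [Fintype α] (M : Matroid α) (w : α → ℝ)
    (x : Set α) (hx : M.IsBase x) :
    (∀ y : Set α, M.IsBase y → (∑ᶠ e ∈ x, w e) ≤ ∑ᶠ e ∈ y, w e) ↔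
      ∃ l : List α, l.Nodup ∧ (∀ a : α, a ∈ l) ∧
        l.Pairwise (fun a b => w a ≤ w b) ∧ matroidGreedy M l = x := by
  classical
  constructor
  · intro hmin
    set r : α → α → Prop := fun a b => w a < w b ∨ (w a = w b ∧ (b ∈ x → a ∈ x)) with hr
    let le : α → α → Bool := fun a b => decide (r a b)
    let l : List α := (Finset.univ : Finset α).toList.mergeSort le
    have hperm : List.Perm l (Finset.univ : Finset α).toList := List.mergeSort_perm _ _
    have hnd : l.Nodup := hperm.nodup_iff.mpr (Finset.nodup_toList _)
    have hall : ∀ a, a ∈ l := fun a =>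
      hperm.mem_iff.mpr (Finset.mem_toList.mpr (Finset.mem_univ a))
    have htrans : ∀ a b c : α, le a b → le b c → le a c := by
      intro a b c hab hbc
      simp only [le, decide_eq_true_eq, hr] at hab hbc ⊢
      rcases hab with h1 | ⟨h1, h1'⟩ <;> rcases hbc with h2 | ⟨h2, h2'⟩
      · exact Or.inl (h1.trans h2)
      · exact Or.inl (h2 ▸ h1)
      · exact Or.inl (h1 ▸ h2)
      · exact Or.inr ⟨h1.trans h2, fun h => h1' (h2' h)⟩
    have htotal : ∀ a b : α, le a b || le b a := by
      intro a b
      simp only [le, Bool.or_eq_true, decide_eq_true_eq, hr]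
      rcases lt_trichotomy (w a) (w b) with h | h | h
      · exact Or.inl (Or.inl h)
      · by_cases hb : b ∈ x
        · exact Or.inr (Or.inr ⟨h.symm, fun _ => hb⟩)
        · exact Or.inl (Or.inr ⟨h, fun hc => absurd hc hb⟩)
      · exact Or.inr (Or.inl h)
    have hsortr : l.Pairwise r := by
      have := List.pairwise_mergeSort htrans htotal (Finset.univ : Finset α).toList
      exact this.imp (fun h => by simpa [le] using h)
    have hsortw : l.Pairwise fun a b => w a ≤ w b := by
      refine hsortr.imp ?_
      rintro a b (h | ⟨h, _⟩)
      · exact h.le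
      · exact h.le
    refine ⟨l, hnd, hall, hsortw, ?_⟩
    exact GreedyAux.eq_aux M w hx hmin hnd hall hsortr l.length [] l rfl rfl (by simp)
  · rintro ⟨l, hnd, hall, hsort, hgx⟩ y hy
    have := GreedyAux.min_aux M w hnd hall hsort l.length [] l y rfl rfl hy (by simp)
    rwa [hgx] at this
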